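/- Let dim H = 4, fix ξ ∈ H*∖{0}, let H̄ = ker ξ, and fix a 1-dimensional subspace H₁ with H = H₁⊕H̄. Given (ω̄, α), where ω̄ ∈ S²H̄*⊗Λ²V* has bijective induced map ω̃̄ : H̄⊗V → H̄*⊗V* (i.e. ω̄ has rank 12), and α is a bilinear map H₁×H̄ → Λ²V* (inducing α̃ : H̄⊗V → H₁*⊗V* by ⟨α̃(h̄⊗v), h₁⊗v'⟩ = α(h₁,h̄)(v,v'), with transpose α̃ᵗ : H₁⊗V → H̄*⊗V*), define Θ(ω̄,α) : (H₁⊕H̄)⊗V → (H₁*⊕H̄*)⊗V* as the block map with components α̃∘ω̃̄⁻¹∘α̃ᵗ : H₁⊗V → H₁*⊗V*, α̃ : H̄⊗V → H₁*⊗V*, α̃ᵗ : H₁⊗V → H̄*⊗V*, and ω̃̄ : H̄⊗V → H̄*⊗V*. Then Θ(ω̄,α) is the induced map ω̃ of a unique element ω ∈ S²H*⊗Λ²V*, and the assignment (ω̄,α) ↦ ω is a bijection onto the set {ω ∈ S²H*⊗Λ²V* : rank(ω) = 12 and Im(ω̃) ∩ (⟨ξ⟩⊗V*) = 0}. (This is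 the paper's Lemma that the space M̃(4,4)_ξ is an affine bundle over M(3,6) with 18-dimensional fibres.) -/

import Mathlib

open TensorProduct Module

/-- The "symmetric with alternating values" condition encoding `S²H*⊗Λ²V*`. -/
def IsSymAlt {k V H : Type} [Field k] [AddCommGroup V] [Module k V]
    [AddCommGroup H] [Module k H]
    (φ : H →ₗ[k] H →ₗ[k] V →ₗ[k] V →ₗ[k] k) : Prop :=
  (∀ h h' : H, φ h h' = φ h' h) ∧ ∀ (h h' : H) (v : V), φ h h' v v = 0

/-- `Corresponds ξ H1 φb α φ` expresses that the induced map `ω̃` of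
`ω = φ ∈ S²H*⊗Λ²V*` is the block map `Θ(ω̄,α)` associated to
`ω̄ = φb ∈ S²H̄*⊗Λ²V*` (with `H̄ = ker ξ`) and the bilinear map
`α : H₁ × H̄ → Λ²V*`: the `H̄⊗V → H̄*⊗V*` block is `ω̃̄`, the two off-diagonal
blocks are `α̃ : H̄⊗V → H₁*⊗V*` and its transpose `α̃ᵗ : H₁⊗V → H̄*⊗V*`, and the
`H₁⊗V → H₁*⊗V*` block is `α̃ ∘ ω̃̄⁻¹ ∘ α̃ᵗ`. -/
def Corresponds {k V H : Type} [Field k] [AddCommGroup V] [Module k V]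
    [AddCommGroup H] [Module k H]
    (ξ : Module.Dual k H) (H1 : Submodule k H)
    (φb : LinearMap.ker ξ →ₗ[k] LinearMap.ker ξ →ₗ[k] V →ₗ[k] V →ₗ[k] k)
    (α : H1 →ₗ[k] LinearMap.ker ξ →ₗ[k] V →ₗ[k] V →ₗ[k] k)
    (φ : H →ₗ[k] H →ₗ[k] V →ₗ[k] V →ₗ[k] k) : Prop :=
  (∀ (x y : LinearMap.ker ξ) (v v' : V), φ (x : H) (y : H) v v' = φb x y v v') ∧
  (∀ (a : H1) (x : LinearMap.ker ξ) (v v' : V),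
    φ (x : H) (a : H) v v' = α a x v v' ∧ φ (a : H) (x : H) v v' = α a x v v') ∧
  (∀ Wb : (LinearMap.ker ξ) ⊗[k] V →ₗ[k] Module.Dual k ((LinearMap.ker ξ) ⊗[k] V),
    (∀ (x y : LinearMap.ker ξ) (v v' : V), Wb (x ⊗ₜ v) (y ⊗ₜ v') = φb x y v v') →
    ∀ Wbinv : Module.Dual k ((LinearMap.ker ξ) ⊗[k] V) →ₗ[k] (LinearMap.ker ξ) ⊗[k] V,
      (∀ u, Wb (Wbinv u) = u) → (∀ u, Wbinv (Wb u) = u) →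
    ∀ At : H1 ⊗[k] V →ₗ[k] Module.Dual k ((LinearMap.ker ξ) ⊗[k] V),
      (∀ (a : H1) (v : V) (y : LinearMap.ker ξ) (v' : V),
        At (a ⊗ₜ v) (y ⊗ₜ v') = α a y v v') →
    ∀ A : (LinearMap.ker ξ) ⊗[k] V →ₗ[k] Module.Dual k (H1 ⊗[k] V),
      (∀ (y : LinearMap.ker ξ) (v : V) (a : H1) (v' : V),
        A (y ⊗ₜ v) (a ⊗ₜ v') = α a y v v') →
    ∀ (a a' : H1) (v v' : V),
      φ (a : H) (a' : H) v v' = A (Wbinv (At (a ⊗ₜ v))) (a' ⊗ₜ v'))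

/-- The target set: `ω = φ` has `rank(ω) = 12` and `Im(ω̃) ∩ (⟨ξ⟩⊗V*) = 0`;
`ω̃` is the induced map `W`, quantified through its determining property. -/
def InTargetSet {k V H : Type} [Field k] [AddCommGroup V] [Module k V]
    [AddCommGroup H] [Module k H]
    (ξ : Module.Dual k H)
    (φ : H →ₗ[k] H →ₗ[k] V →ₗ[k] V →ₗ[k] k) : Prop :=
  ∀ W : H ⊗[k] V →ₗ[k] Module.Dual k (H ⊗[k] V),
    (∀ (h h' : H) (v v' : V), W (h ⊗ₜ v) (h' ⊗ₜ v') = φ h h' v v') →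
    Module.finrank k (LinearMap.range W) = 12 ∧
    LinearMap.range W ⊓
      Submodule.span k {f : Module.Dual k (H ⊗[k] V) |
        ∃ z : Module.Dual k V, f = dualDistrib k H V (ξ ⊗ₜ z)} = ⊥


namespace S5
variable {k V X Y : Type} [Field k] [AddCommGroup V] [Module k V]
  [AddCommGroup X] [Module k X] [AddCommGroup Y] [Module k Y]

noncomputable def ind (ψ : X →ₗ[k] Y →ₗ[k] V →ₗ[k] V →ₗ[k] k) :
    X ⊗[k] V →ₗ[k] Dual k (Y ⊗[k] V) :=
  TensorProduct.lift (((LinearMap.lflip (R₀ := k)).toLinearMap ∘ₗ ψ).compr₂ (TensorProduct.uncurry (RingHom.id k) Y V k))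

@[simp] lemma ind_apply (ψ : X →ₗ[k] Y →ₗ[k] V →ₗ[k] V →ₗ[k] k)
    (x : X) (v : V) (y : Y) (v' : V) :
    ind ψ (x ⊗ₜ v) (y ⊗ₜ v') = ψ x y v v' := by
  simp [ind]

lemma dual_ext {T T' : X ⊗[k] V →ₗ[k] Dual k (Y ⊗[k] V)}
    (h : ∀ (x : X) (v : V) (y : Y) (v' : V), T (x ⊗ₜ v) (y ⊗ₜ v') = T' (x ⊗ₜ v) (y ⊗ₜ v')) :
    T = T' :=
  TensorProduct.ext' fun x v => TensorProduct.ext' fun y v' => h x v y v'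

noncomputable def coind (T : X ⊗[k] V →ₗ[k] Dual k (Y ⊗[k] V)) :
    X →ₗ[k] Y →ₗ[k] V →ₗ[k] V →ₗ[k] k :=
  (LinearMap.lflip (R₀ := k)).toLinearMap ∘ₗ (TensorProduct.lcurry (RingHom.id k) X V (Y →ₗ[k] V →ₗ[k] k)
    ((TensorProduct.lcurry (RingHom.id k) Y V k) ∘ₗ T))

@[simp] lemma coind_apply (T : X ⊗[k] V →ₗ[k] Dual k (Y ⊗[k] V))
    (x : X) (y : Y) (v v' : V) :
    coind T x y v v' = T (x ⊗ₜ v) (y ⊗ₜ v') := by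
  simp [coind]

lemma neg_self_zero [CharZero k] (a : k) (h : a = -a) : a = 0 := by
  have h2 : (2 : k) * a = 0 := by linear_combination h
  rcases mul_eq_zero.mp h2 with h' | h'
  · exact absurd h' two_ne_zero
  · exact h'

/-- polarization -/
lemma pol {M : Type} [AddCommGroup M] [Module k M] (B : V →ₗ[k] V →ₗ[k] M)
    (h : ∀ v, B v v = 0) (v v' : V) : B v v' = -B v' v := by
  have := h (v + v')
  simp only [map_add, LinearMap.add_apply, h v, h v'] at this
  rw [zero_add, add_zero] at this
  linear_combination (norm := module) this

lemma rank_one_rep [FiniteDimensional k X] (h1 : finrank k X = 1) :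
    ∃ e : X, ∀ a : X, ∃ c : k, a = c • e := by
  let b : Basis (Fin 1) k X := finBasisOfFinrankEq k X h1
  refine ⟨b 0, fun a => ⟨b.repr a 0, ?_⟩⟩
  conv_lhs => rw [← b.sum_repr a]
  simp

end S5

open S5

set_option maxHeartbeats 1600000 in
/-- for `dim H = 4`, fixed `ξ ∈ H*∖{0}`, `H̄ = ker ξ` and a fixed
line `H₁` with `H = H₁ ⊕ H̄`, the assignment `(ω̄, α) ↦ ω` (where `ω̄` ranges
over tensors in `S²H̄*⊗Λ²V*` with bijective `ω̃̄`, `α` over bilinear maps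
`H₁×H̄ → Λ²V*`, and `ω` is the unique element of `S²H*⊗Λ²V*` with
`ω̃ = Θ(ω̄,α)`) is well defined and a bijection onto
`{ω : rank(ω) = 12 and Im(ω̃) ∩ (⟨ξ⟩⊗V*) = 0}`: the affine-bundle lemma for
`M̃(4,4)_ξ → M(3,6)`. -/
theorem statement5
    (k : Type) [Field k] [IsAlgClosed k] [CharZero k]
    (V H : Type) [AddCommGroup V] [Module k V] [AddCommGroup H] [Module k H]
    [FiniteDimensional k V] [FiniteDimensional k H]
    (hV : finrank k V = 4) (hH : finrank k H = 4)
    (ξ : Dual k H) (hξ : ξ ≠ 0)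
    (H1 : Submodule k H) (hH1 : finrank k H1 = 1)
    (hcompl : IsCompl H1 (LinearMap.ker ξ)) :
    -- (i) for every pair (ω̄, α) there is a unique ω with ω̃ = Θ(ω̄,α), and
    --     this ω lies in the target set;
    (∀ (φb : LinearMap.ker ξ →ₗ[k] LinearMap.ker ξ →ₗ[k] V →ₗ[k] V →ₗ[k] k),
      IsSymAlt φb →
      (∀ Wb : (LinearMap.ker ξ) ⊗[k] V →ₗ[k] Dual k ((LinearMap.ker ξ) ⊗[k] V),
        (∀ (x y : LinearMap.ker ξ) (v v' : V), Wb (x ⊗ₜ v) (y ⊗ₜ v') = φb x y v v') →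
        Function.Bijective Wb) →
      ∀ (α : H1 →ₗ[k] LinearMap.ker ξ →ₗ[k] V →ₗ[k] V →ₗ[k] k),
        (∀ (a : H1) (x : LinearMap.ker ξ) (v : V), α a x v v = 0) →
        (∃! φ : H →ₗ[k] H →ₗ[k] V →ₗ[k] V →ₗ[k] k,
          IsSymAlt φ ∧ Corresponds ξ H1 φb α φ) ∧
        (∀ φ : H →ₗ[k] H →ₗ[k] V →ₗ[k] V →ₗ[k] k,
          IsSymAlt φ → Corresponds ξ H1 φb α φ → InTargetSet ξ φ)) ∧
    -- (ii) every ω in the target set arises from a unique pair (ω̄, α).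
    (∀ φ : H →ₗ[k] H →ₗ[k] V →ₗ[k] V →ₗ[k] k,
      IsSymAlt φ → InTargetSet ξ φ →
      ∃! p : (LinearMap.ker ξ →ₗ[k] LinearMap.ker ξ →ₗ[k] V →ₗ[k] V →ₗ[k] k) ×
             (H1 →ₗ[k] LinearMap.ker ξ →ₗ[k] V →ₗ[k] V →ₗ[k] k),
        IsSymAlt p.1 ∧
        (∀ Wb : (LinearMap.ker ξ) ⊗[k] V →ₗ[k] Dual k ((LinearMap.ker ξ) ⊗[k] V),
          (∀ (x y : LinearMap.ker ξ) (v v' : V), Wb (x ⊗ₜ v) (y ⊗ₜ v') = p.1 x y v v') →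
          Function.Bijective Wb) ∧
        (∀ (a : H1) (x : LinearMap.ker ξ) (v : V), p.2 a x v v = 0) ∧
        Corresponds ξ H1 p.1 p.2 φ) := by
  
  classical
  -- projections and inclusions for the splitting H = H1 ⊕ ker ξ
  set Hb := LinearMap.ker ξ with hHbdef
  let ι1 : H1 →ₗ[k] H := H1.subtype
  let ιb : Hb →ₗ[k] H := Hb.subtype
  let p1 : H →ₗ[k] H1 := H1.linearProjOfIsCompl Hb hcompl
  let pb : H →ₗ[k] Hb := Hb.linearProjOfIsCompl H1 hcompl.symm
  have hp1a : ∀ a : H1, p1 ↑a = a := fun a =>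
    Submodule.linearProjOfIsCompl_apply_left hcompl a
  have hp1x : ∀ x : Hb, p1 ↑x = 0 := fun x =>
    Submodule.linearProjOfIsCompl_apply_right hcompl x
  have hpbx : ∀ x : Hb, pb ↑x = x := fun x =>
    Submodule.linearProjOfIsCompl_apply_left hcompl.symm x
  have hpba : ∀ a : H1, pb ↑a = 0 := fun a =>
    Submodule.linearProjOfIsCompl_apply_right hcompl.symm a
  have hsum : ∀ h : H, (↑(p1 h) + ↑(pb h) : H) = h := fun h =>
    Submodule.projection_add_projection_eq_self hcompl h
  let I1 : H1 ⊗[k] V →ₗ[k] H ⊗[k] V := LinearMap.rTensor V ι1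
  let Ib : Hb ⊗[k] V →ₗ[k] H ⊗[k] V := LinearMap.rTensor V ιb
  let P1 : H ⊗[k] V →ₗ[k] H1 ⊗[k] V := LinearMap.rTensor V p1
  let Pb : H ⊗[k] V →ₗ[k] Hb ⊗[k] V := LinearMap.rTensor V pb
  have hdec : ∀ u : H ⊗[k] V, I1 (P1 u) + Ib (Pb u) = u := by
    intro u
    have h0 : (I1 ∘ₗ P1 + Ib ∘ₗ Pb) = LinearMap.id (R := k) (M := H ⊗[k] V) :=
      TensorProduct.ext' fun h v => by
        simp only [LinearMap.add_apply, LinearMap.comp_apply, I1, P1, Ib, Pb,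
          LinearMap.rTensor_tmul, LinearMap.id_apply, ← add_tmul]
        exact congrArg (fun z => z ⊗ₜ[k] v) (hsum h)
    simpa using LinearMap.congr_fun h0 u
  have hP1I1 : ∀ u, P1 (I1 u) = u := by
    intro u
    have h0 : (P1 ∘ₗ I1) = LinearMap.id (R := k) (M := H1 ⊗[k] V) :=
      TensorProduct.ext' fun a v => by
        simp only [LinearMap.comp_apply, I1, P1, LinearMap.rTensor_tmul, LinearMap.id_apply]
        rw [show p1 (ι1 a) = a from hp1a a]
    simpa using LinearMap.congr_fun h0 u
  have hP1Ib : ∀ w, P1 (Ib w) = 0 := by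
    intro w
    have h0 : (P1 ∘ₗ Ib) = 0 :=
      TensorProduct.ext' fun x v => by
        simp only [LinearMap.comp_apply, Ib, P1, LinearMap.rTensor_tmul, LinearMap.zero_apply]
        rw [show p1 (ιb x) = 0 from hp1x x, zero_tmul]
    simpa using LinearMap.congr_fun h0 w
  have hPbIb : ∀ w, Pb (Ib w) = w := by
    intro w
    have h0 : (Pb ∘ₗ Ib) = LinearMap.id (R := k) (M := Hb ⊗[k] V) :=
      TensorProduct.ext' fun x v => by
        simp only [LinearMap.comp_apply, Ib, Pb, LinearMap.rTensor_tmul, LinearMap.id_apply]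
        rw [show pb (ιb x) = x from hpbx x]
    simpa using LinearMap.congr_fun h0 w
  have hPbI1 : ∀ u, Pb (I1 u) = 0 := by
    intro u
    have h0 : (Pb ∘ₗ I1) = 0 :=
      TensorProduct.ext' fun a v => by
        simp only [LinearMap.comp_apply, I1, Pb, LinearMap.rTensor_tmul, LinearMap.zero_apply]
        rw [show pb (ι1 a) = 0 from hpba a, zero_tmul]
    simpa using LinearMap.congr_fun h0 u
  -- the span of the ξ ⊗ z functionals is the kernel of restriction to Hb ⊗ V
  have spanEq : Submodule.span k {f : Dual k (H ⊗[k] V) |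
        ∃ z : Dual k V, f = dualDistrib k H V (ξ ⊗ₜ z)}
      = LinearMap.ker Ib.dualMap := by
    obtain ⟨e0, he0⟩ : ∃ e0 : H, ξ e0 ≠ 0 := by
      by_contra hc; push_neg at hc
      exact hξ (LinearMap.ext fun h => by simpa using hc h)
    apply le_antisymm
    · rw [Submodule.span_le]
      rintro f ⟨z, rfl⟩
      simp only [SetLike.mem_coe, LinearMap.mem_ker]
      apply TensorProduct.ext'
      intro x v
      have hx : ξ (x : H) = 0 := x.2
      simp only [Ib, LinearMap.dualMap_apply, LinearMap.rTensor_tmul, dualDistrib_apply,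
        LinearMap.zero_apply]
      rw [show ξ (ιb x) = 0 from hx, zero_mul]
    · intro f hf
      have hf0 : Ib.dualMap f = 0 := LinearMap.mem_ker.mp hf
      obtain ⟨e, hee⟩ : ∃ e : H, ξ e = 1 :=
        ⟨(ξ e0)⁻¹ • e0, by rw [map_smul, smul_eq_mul, inv_mul_cancel₀ he0]⟩
      refine Submodule.subset_span ⟨f ∘ₗ ((TensorProduct.mk k H V) e), ?_⟩
      refine (TensorProduct.ext' fun h v => ?_).symm
      have hxk : h - ξ h • e ∈ Hb := by
        simp [hHbdef, LinearMap.mem_ker, map_sub, map_smul, hee, smul_eq_mul]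
      have h0 : f ((h - ξ h • e) ⊗ₜ v) = 0 := by
        have : f ((h - ξ h • e) ⊗ₜ v) = (Ib.dualMap f) ((⟨_, hxk⟩ : Hb) ⊗ₜ v) := rfl
        rw [this, hf0]; rfl
      have hsplit : (ξ h • e) ⊗ₜ[k] v + (h - ξ h • e) ⊗ₜ[k] v = h ⊗ₜ[k] v := by
        rw [← add_tmul]; congr 1; abel
      calc dualDistrib k H V (ξ ⊗ₜ (f ∘ₗ ((TensorProduct.mk k H V) e))) (h ⊗ₜ v)
          = ξ h * f (e ⊗ₜ v) := by rw [dualDistrib_apply]; rfl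
        _ = f ((ξ h • e) ⊗ₜ v) + f ((h - ξ h • e) ⊗ₜ v) := by
            rw [h0, add_zero, ← smul_tmul', map_smul, smul_eq_mul]
        _ = f (h ⊗ₜ v) := by rw [← map_add, hsplit]
  -- dimensions
  have hfinHb : finrank k Hb = 3 := by
    obtain ⟨e0, he0⟩ : ∃ e0 : H, ξ e0 ≠ 0 := by
      by_contra hc; push_neg at hc
      exact hξ (LinearMap.ext fun h => by simpa using hc h)
    have hr : LinearMap.range ξ = ⊤ := by
      rw [LinearMap.range_eq_top]
      intro c
      refine ⟨(c * (ξ e0)⁻¹) • e0, ?_⟩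
      simp only [map_smul, smul_eq_mul]
      field_simp
    have h2 := LinearMap.finrank_range_add_finrank_ker ξ
    rw [hr, finrank_top, finrank_self, hH] at h2
    rw [hHbdef]
    omega
  have hTdim : finrank k (H ⊗[k] V) = 16 := by rw [finrank_tensorProduct, hH, hV]
  have hTbdim : finrank k (Hb ⊗[k] V) = 12 := by rw [finrank_tensorProduct, hfinHb, hV]
  have hT1dim : finrank k (H1 ⊗[k] V) = 4 := by rw [finrank_tensorProduct, hH1, hV]
  obtain ⟨e1, hrep⟩ := rank_one_rep (k := k) (X := H1) hH1
  constructor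
  · -- PART (i)
    intro φb hφbsa hbij α halt
    have hφbsymm := hφbsa.1
    have hφbalt := hφbsa.2
    -- concrete induced maps
    set Wb0 : Hb ⊗[k] V →ₗ[k] Dual k (Hb ⊗[k] V) := ind φb with hWb0def
    have hWb0 : ∀ (x y : Hb) (v v' : V), Wb0 (x ⊗ₜ v) (y ⊗ₜ v') = φb x y v v' :=
      fun x y v v' => ind_apply φb x v y v'
    have hbij0 : Function.Bijective Wb0 := hbij Wb0 hWb0
    let Wbe : (Hb ⊗[k] V) ≃ₗ[k] Dual k (Hb ⊗[k] V) := LinearEquiv.ofBijective Wb0 hbij0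
    let Wbinv0 : Dual k (Hb ⊗[k] V) →ₗ[k] Hb ⊗[k] V := Wbe.symm
    have hWL : ∀ u, Wb0 (Wbinv0 u) = u := fun u => Wbe.apply_symm_apply u
    have hWR : ∀ u, Wbinv0 (Wb0 u) = u := fun u => Wbe.symm_apply_apply u
    set At0 : H1 ⊗[k] V →ₗ[k] Dual k (Hb ⊗[k] V) := ind α with hAt0def
    have hAt0 : ∀ (a : H1) (v : V) (y : Hb) (v' : V),
        At0 (a ⊗ₜ v) (y ⊗ₜ v') = α a y v v' := fun a v y v' => ind_apply α a v y v'
    set A0 : Hb ⊗[k] V →ₗ[k] Dual k (H1 ⊗[k] V) := ind α.flip with hA0def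
    have hA0 : ∀ (y : Hb) (v : V) (a : H1) (v' : V),
        A0 (y ⊗ₜ v) (a ⊗ₜ v') = α a y v v' := fun y v a v' => ind_apply α.flip y v a v'
    set T : H1 ⊗[k] V →ₗ[k] Dual k (H1 ⊗[k] V) := A0 ∘ₗ Wbinv0 ∘ₗ At0 with hTdef
    -- skew-symmetry facts
    have hαpol : ∀ (a : H1) (x : Hb) (v v' : V), α a x v' v = -α a x v v' :=
      fun a x v v' => pol (α a x) (halt a x) v' v
    have hφbpol : ∀ (x y : Hb) (v v' : V), φb x y v' v = -φb x y v v' :=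
      fun x y v v' => pol (φb x y) (fun v => hφbalt x y v) v' v
    have hWb0skew : ∀ w w', Wb0 w w' = -(Wb0 w' w) := by
      have h0 : Wb0 = -Wb0.flip := dual_ext fun x v y v' => by
        simp only [LinearMap.neg_apply, LinearMap.flip_apply, hWb0]
        rw [hφbsymm y x]
        exact hφbpol x y v' v
      intro w w'
      conv_lhs => rw [h0]
      simp
    have hWb0alt : ∀ w, Wb0 w w = 0 := fun w => neg_self_zero _ (hWb0skew w w)
    have hA0At0 : ∀ (w : Hb ⊗[k] V) (u1 : H1 ⊗[k] V), A0 w u1 = -(At0 u1 w) := by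
      have h0 : A0 = -At0.flip := dual_ext fun y v a v' => by
        simp only [LinearMap.neg_apply, LinearMap.flip_apply, hA0, hAt0]
        exact (hαpol a y v v').symm ▸ (by rw [hαpol a y v' v]; ring_nf)
      intro w u1
      conv_lhs => rw [h0]
      simp
    -- one-dimensionality consequences for T
    have hTsymm : ∀ (a a' : H1) (v v' : V), T (a ⊗ₜ v) (a' ⊗ₜ v') = T (a' ⊗ₜ v) (a ⊗ₜ v') := by
      intro a a' v v'
      obtain ⟨c, rfl⟩ := hrep a
      obtain ⟨c', rfl⟩ := hrep a'
      simp only [← smul_tmul', map_smul, LinearMap.smul_apply, smul_eq_mul]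
      ring
    have hTalt : ∀ (a a' : H1) (v : V), T (a ⊗ₜ v) (a' ⊗ₜ v) = 0 := by
      have base : ∀ v : V, T (e1 ⊗ₜ v) (e1 ⊗ₜ v) = 0 := by
        intro v
        rw [hTdef]
        simp only [LinearMap.comp_apply]
        rw [hA0At0]
        have h2 : At0 (e1 ⊗ₜ[k] v) = Wb0 (Wbinv0 (At0 (e1 ⊗ₜ[k] v))) := (hWL _).symm
        rw [show At0 (e1 ⊗ₜ[k] v) (Wbinv0 (At0 (e1 ⊗ₜ[k] v)))
            = Wb0 (Wbinv0 (At0 (e1 ⊗ₜ[k] v))) (Wbinv0 (At0 (e1 ⊗ₜ[k] v))) from by rw [← h2],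
          hWb0alt]
        ring
      intro a a' v
      obtain ⟨c, rfl⟩ := hrep a
      obtain ⟨c', rfl⟩ := hrep a'
      simp only [← smul_tmul', map_smul, LinearMap.smul_apply, smul_eq_mul, base, mul_zero]
    -- the candidate φ
    set φ0 : H →ₗ[k] H →ₗ[k] V →ₗ[k] V →ₗ[k] k :=
      φb.compl₁₂ pb pb + α.compl₁₂ p1 pb + (α.compl₁₂ p1 pb).flip
        + (coind T).compl₁₂ p1 p1 with hφ0def
    have hφ0 : ∀ (h h' : H) (v v' : V), φ0 h h' v v'
        = φb (pb h) (pb h') v v' + α (p1 h) (pb h') v v' + α (p1 h') (pb h) v v'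
          + T ((p1 h) ⊗ₜ v) ((p1 h') ⊗ₜ v') := by
      intro h h' v v'
      simp [hφ0def, LinearMap.compl₁₂_apply, LinearMap.add_apply, LinearMap.flip_apply,
        coind_apply]
    have hsa0 : IsSymAlt φ0 := by
      constructor
      · intro h h'
        apply LinearMap.ext; intro v; apply LinearMap.ext; intro v'
        rw [hφ0, hφ0, hφbsymm (pb h) (pb h'), hTsymm]
        ring
      · intro h h' v
        rw [hφ0, hφbalt, halt, halt, hTalt]
        ring
    have hcorr0 : Corresponds ξ H1 φb α φ0 := by
      refine ⟨?_, ?_, ?_⟩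
      · intro x y v v'
        rw [hφ0]
        simp [hp1x, hpbx, zero_tmul]
      · intro a x v v'
        constructor
        · rw [hφ0]
          simp [hp1x, hpbx, hp1a, hpba, zero_tmul]
        · rw [hφ0]
          simp [hp1x, hpbx, hp1a, hpba, zero_tmul]
      · intro Wb hWb Wbinv hinv1 hinv2 At hAt A hA a a' v v'
        have hWbeq : Wb = Wb0 := dual_ext fun x v y v' => (hWb x y v v').trans (hWb0 x y v v').symm
        have hAteq : At = At0 := dual_ext fun a v y v' => (hAt a v y v').trans (hAt0 a v y v').symm
        have hAeq : A = A0 := dual_ext fun y v a v' => (hA y v a v').trans (hA0 y v a v').symm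
        have hinveq : ∀ u, Wbinv u = Wbinv0 u := by
          intro u
          have : Wbinv0 u = Wbinv0 (Wb (Wbinv u)) := by rw [hinv1 u]
          rw [this, hWbeq, hWR]
        rw [hAeq, hAteq, hinveq]
        rw [hφ0]
        simp [hp1a, hpba, zero_tmul]
        rfl
    -- pin down any φ satisfying Corresponds
    have pin : ∀ ψ : H →ₗ[k] H →ₗ[k] V →ₗ[k] V →ₗ[k] k, Corresponds ξ H1 φb α ψ →
        ∀ (h h' : H) (v v' : V), ψ h h' v v'
          = φb (pb h) (pb h') v v' + α (p1 h) (pb h') v v' + α (p1 h') (pb h) v v'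
            + T ((p1 h) ⊗ₜ v) ((p1 h') ⊗ₜ v') := by
      intro ψ hc h h' v v'
      conv_lhs => rw [← hsum h, ← hsum h']
      simp only [map_add, LinearMap.add_apply]
      rw [hc.1 (pb h) (pb h') v v',
        (hc.2.1 (p1 h') (pb h) v v').1,
        (hc.2.1 (p1 h) (pb h') v v').2,
        hc.2.2 Wb0 hWb0 Wbinv0 hWL hWR At0 hAt0 A0 hA0 (p1 h) (p1 h') v v']
      have : A0 (Wbinv0 (At0 ((p1 h) ⊗ₜ v))) ((p1 h') ⊗ₜ v')
          = T ((p1 h) ⊗ₜ v) ((p1 h') ⊗ₜ v') := rfl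
      rw [this]
      ring
    constructor
    · -- existence and uniqueness
      refine ⟨φ0, ⟨hsa0, hcorr0⟩, ?_⟩
      intro ψ ⟨hsaψ, hcψ⟩
      ext h h' v v'
      rw [pin ψ hcψ h h' v v', hφ0]
    · -- membership in the target set
      intro φ hsaφ hcφ
      intro W hW
      -- block identities
      have hL1 : Ib.dualMap ∘ₗ W ∘ₗ I1 = At0 := dual_ext fun a v y v' => by
        simp only [LinearMap.comp_apply, I1, Ib, LinearMap.rTensor_tmul,
          ι1, ιb, Submodule.subtype_apply, LinearMap.dualMap_apply, hW]
        rw [(hcφ.2.1 a y v v').2, hAt0]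
      have hL2 : Ib.dualMap ∘ₗ W ∘ₗ Ib = Wb0 := dual_ext fun x v y v' => by
        simp only [LinearMap.comp_apply, Ib, LinearMap.rTensor_tmul,
          ι1, ιb, Submodule.subtype_apply, LinearMap.dualMap_apply, hW]
        rw [hcφ.1 x y v v', hWb0]
      have hL3 : I1.dualMap ∘ₗ W ∘ₗ Ib = A0 := dual_ext fun y v a v' => by
        simp only [LinearMap.comp_apply, I1, Ib, LinearMap.rTensor_tmul,
          ι1, ιb, Submodule.subtype_apply, LinearMap.dualMap_apply, hW]
        rw [(hcφ.2.1 a y v v').1, hA0]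
      have hL4 : I1.dualMap ∘ₗ W ∘ₗ I1 = A0 ∘ₗ Wbinv0 ∘ₗ At0 := dual_ext fun a v a' v' => by
        simp only [LinearMap.comp_apply, I1, LinearMap.rTensor_tmul,
          ι1, ιb, Submodule.subtype_apply, LinearMap.dualMap_apply, hW]
        exact hcφ.2.2 Wb0 hWb0 Wbinv0 hWL hWR At0 hAt0 A0 hA0 a a' v v'
      -- kernel analysis
      have hPbOf : ∀ u : H ⊗[k] V, Ib.dualMap (W u) = 0 →
          Pb u = -(Wbinv0 (At0 (P1 u))) := by
        intro u h0
        have e1' : At0 (P1 u) + Wb0 (Pb u) = 0 := by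
          have c1 : At0 (P1 u) + Wb0 (Pb u)
              = (Ib.dualMap ∘ₗ W ∘ₗ I1) (P1 u) + (Ib.dualMap ∘ₗ W ∘ₗ Ib) (Pb u) := by
            rw [hL1, hL2]
          have c2 : (Ib.dualMap ∘ₗ W ∘ₗ I1) (P1 u) + (Ib.dualMap ∘ₗ W ∘ₗ Ib) (Pb u)
              = Ib.dualMap (W u) := by
            simp only [LinearMap.comp_apply]
            rw [← map_add, ← map_add, hdec u]
          rw [c1, c2, h0]
        have e2' : Wb0 (Pb u) = -(At0 (P1 u)) := by
          rw [eq_neg_iff_add_eq_zero, add_comm]; exact e1'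
        calc Pb u = Wbinv0 (Wb0 (Pb u)) := (hWR _).symm
          _ = Wbinv0 (-(At0 (P1 u))) := by rw [e2']
          _ = -(Wbinv0 (At0 (P1 u))) := map_neg _ _
      have keyker : ∀ u : H ⊗[k] V, Ib.dualMap (W u) = 0 → W u = 0 := by
        intro u h0
        have ePb := hPbOf u h0
        have e2 : I1.dualMap (W u) = 0 := by
          have c1 : I1.dualMap (W u)
              = (I1.dualMap ∘ₗ W ∘ₗ I1) (P1 u) + (I1.dualMap ∘ₗ W ∘ₗ Ib) (Pb u) := by
            simp only [LinearMap.comp_apply]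
            rw [← map_add, ← map_add, hdec u]
          rw [c1, hL4, hL3, ePb]
          simp only [LinearMap.comp_apply, map_neg]
          abel
        apply LinearMap.ext
        intro u'
        have : W u u' = I1.dualMap (W u) (P1 u') + Ib.dualMap (W u) (Pb u') := by
          simp only [LinearMap.dualMap_apply]
          rw [← map_add, hdec u']
        rw [this, e2, h0]
        simp
      set J : H1 ⊗[k] V →ₗ[k] H ⊗[k] V := I1 - Ib ∘ₗ Wbinv0 ∘ₗ At0 with hJdef
      have hkerW : LinearMap.ker W = LinearMap.range J := by
        apply le_antisymm
        · intro u hu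
          have hu0 : W u = 0 := LinearMap.mem_ker.mp hu
          have h0 : Ib.dualMap (W u) = 0 := by rw [hu0]; simp
          have ePb := hPbOf u h0
          refine ⟨P1 u, ?_⟩
          rw [hJdef]
          simp only [LinearMap.sub_apply, LinearMap.comp_apply]
          conv_rhs => rw [← hdec u]
          rw [ePb, map_neg]
          abel
        · rintro u ⟨u1, rfl⟩
          apply LinearMap.mem_ker.mpr
          apply keyker
          have : Ib.dualMap (W (J u1))
              = (Ib.dualMap ∘ₗ W ∘ₗ I1) u1
                - (Ib.dualMap ∘ₗ W ∘ₗ Ib) (Wbinv0 (At0 u1)) := by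
            simp only [hJdef, LinearMap.sub_apply, LinearMap.comp_apply, map_sub]
          rw [this, hL1, hL2, hWL]
          simp
      have hJinj : Function.Injective J := by
        have hleft : ∀ u1, P1 (J u1) = u1 := by
          intro u1
          simp only [hJdef, LinearMap.sub_apply, LinearMap.comp_apply, map_sub]
          rw [hP1I1, hP1Ib, sub_zero]
        exact Function.LeftInverse.injective hleft
      have hker4 : finrank k (LinearMap.ker W) = 4 := by
        rw [hkerW, LinearMap.finrank_range_of_inj hJinj, hT1dim]
      have hrn := LinearMap.finrank_range_add_finrank_ker W
      rw [hTdim, hker4] at hrn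
      constructor
      · omega
      · rw [spanEq, Submodule.eq_bot_iff]
        rintro f hf
        obtain ⟨⟨u, rfl⟩, hfk⟩ := Submodule.mem_inf.mp hf
        exact keyker u (LinearMap.mem_ker.mp hfk)
  · -- PART (ii)
    intro φ hsa hits
    have hsymm := hsa.1
    have haltφ := hsa.2
    set W0 : H ⊗[k] V →ₗ[k] Dual k (H ⊗[k] V) := ind φ with hW0def
    have hW0 : ∀ (h h' : H) (v v' : V), W0 (h ⊗ₜ v) (h' ⊗ₜ v') = φ h h' v v' :=
      fun h h' v v' => ind_apply φ h v h' v'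
    obtain ⟨hrank, hint⟩ := hits W0 hW0
    have hφpol : ∀ (h h' : H) (v v' : V), φ h h' v' v = -φ h h' v v' :=
      fun h h' v v' => pol (φ h h') (haltφ h h') v' v
    have hW0skew : ∀ u u', W0 u u' = -(W0 u' u) := by
      have h0 : W0 = -W0.flip := dual_ext fun h v h' v' => by
        simp only [LinearMap.neg_apply, LinearMap.flip_apply, hW0]
        rw [hsymm h' h]
        exact hφpol h h' v' v
      intro u u'
      conv_lhs => rw [h0]
      simp
    set R : H ⊗[k] V →ₗ[k] Dual k (Hb ⊗[k] V) := Ib.dualMap ∘ₗ W0 with hRdef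
    have hkerR : ∀ u, R u = 0 → W0 u = 0 := by
      intro u h0
      have hmem : W0 u ∈ LinearMap.ker Ib.dualMap := LinearMap.mem_ker.mpr h0
      have hsp : W0 u ∈ Submodule.span k {f : Dual k (H ⊗[k] V) |
          ∃ z : Dual k V, f = dualDistrib k H V (ξ ⊗ₜ z)} := by
        rw [spanEq]; exact hmem
      have hb : W0 u ∈ (⊥ : Submodule k (Dual k (H ⊗[k] V))) := by
        rw [← hint]
        exact Submodule.mem_inf.mpr ⟨⟨u, rfl⟩, hsp⟩
      exact (Submodule.mem_bot k).mp hb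
    have hkerReq : LinearMap.ker R = LinearMap.ker W0 := by
      apply le_antisymm
      · intro u hu
        exact LinearMap.mem_ker.mpr (hkerR u (LinearMap.mem_ker.mp hu))
      · intro u hu
        apply LinearMap.mem_ker.mpr
        have : W0 u = 0 := LinearMap.mem_ker.mp hu
        rw [hRdef]
        simp [LinearMap.comp_apply, this]
    have hkerW04 : finrank k (LinearMap.ker W0) = 4 := by
      have h1 := LinearMap.finrank_range_add_finrank_ker W0
      rw [hTdim, hrank] at h1
      omega
    have hRsurj : Function.Surjective R := by
      have h1 := LinearMap.finrank_range_add_finrank_ker R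
      rw [hTdim, hkerReq, hkerW04] at h1
      have h2 : finrank k (LinearMap.range R) = finrank k (Dual k (Hb ⊗[k] V)) := by
        rw [Subspace.dual_finrank_eq, hTbdim]
        omega
      exact LinearMap.range_eq_top.mp (Submodule.eq_top_of_finrank_eq h2)
    -- restricted data
    set φb : Hb →ₗ[k] Hb →ₗ[k] V →ₗ[k] V →ₗ[k] k := φ.compl₁₂ ιb ιb with hφbdef
    set α : H1 →ₗ[k] Hb →ₗ[k] V →ₗ[k] V →ₗ[k] k := φ.compl₁₂ ι1 ιb with hαdef
    have hφbval : ∀ (x y : Hb) (v v' : V), φb x y v v' = φ ↑x ↑y v v' :=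
      fun x y v v' => rfl
    have hαval : ∀ (a : H1) (x : Hb) (v v' : V), α a x v v' = φ ↑a ↑x v v' :=
      fun a x v v' => rfl
    set Wb0 : Hb ⊗[k] V →ₗ[k] Dual k (Hb ⊗[k] V) := ind φb with hWb0def
    have hWb0 : ∀ (x y : Hb) (v v' : V), Wb0 (x ⊗ₜ v) (y ⊗ₜ v') = φb x y v v' :=
      fun x y v v' => ind_apply φb x v y v'
    have hWb0R : Wb0 = R ∘ₗ Ib := dual_ext fun x v y v' => by
      simp only [hRdef, LinearMap.comp_apply, Ib, ιb, LinearMap.rTensor_tmul,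
        Submodule.subtype_apply, LinearMap.dualMap_apply, hW0, hWb0]
      exact (hφbval x y v v')
    have hWb0ker : ∀ w, Wb0 w = 0 → w = 0 := by
      intro w hw
      have hR0 : R (Ib w) = 0 := by
        have : (R ∘ₗ Ib) w = 0 := by rw [← hWb0R]; exact hw
        simpa using this
      have hW0Ib : W0 (Ib w) = 0 := hkerR _ hR0
      have hzero : ∀ g : Dual k (Hb ⊗[k] V), g w = 0 := by
        intro g
        obtain ⟨u, rfl⟩ := hRsurj g
        calc R u w = W0 u (Ib w) := rfl
          _ = -(W0 (Ib w) u) := hW0skew _ _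
          _ = 0 := by rw [hW0Ib]; simp
      exact (Module.forall_dual_apply_eq_zero_iff k w).mp hzero
    have hWb0inj : Function.Injective Wb0 := by
      rw [← LinearMap.ker_eq_bot]
      exact (Submodule.eq_bot_iff _).mpr fun w hw => hWb0ker w (LinearMap.mem_ker.mp hw)
    have hWb0bij : Function.Bijective Wb0 :=
      ⟨hWb0inj, (LinearMap.injective_iff_surjective_of_finrank_eq_finrank
        (Subspace.dual_finrank_eq).symm).mp hWb0inj⟩
    have hbijWb : ∀ Wb : Hb ⊗[k] V →ₗ[k] Dual k (Hb ⊗[k] V),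
        (∀ (x y : Hb) (v v' : V), Wb (x ⊗ₜ v) (y ⊗ₜ v') = φb x y v v') →
        Function.Bijective Wb := by
      intro Wb hWb
      have hWbeq : Wb = Wb0 :=
        dual_ext fun x v y v' => (hWb x y v v').trans (hWb0 x y v v').symm
      rw [hWbeq]
      exact hWb0bij
    have hcorr : Corresponds ξ H1 φb α φ := by
      refine ⟨fun x y v v' => rfl, fun a x v v' => ⟨?_, rfl⟩, ?_⟩
      · calc φ ↑x ↑a v v' = φ ↑a ↑x v v' := by rw [hsymm (↑x : H) (↑a : H)]
          _ = α a x v v' := rfl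
      · intro Wb hWb Wbinv hinv1 hinv2 At hAt A hA a a' v v'
        have hWbeq : Wb = Wb0 :=
          dual_ext fun x v y v' => (hWb x y v v').trans (hWb0 x y v v').symm
        have hL1' : Ib.dualMap ∘ₗ W0 ∘ₗ I1 = At := dual_ext fun b v y v' => by
          simp only [LinearMap.comp_apply, I1, Ib, ι1, ιb, LinearMap.rTensor_tmul,
            Submodule.subtype_apply, LinearMap.dualMap_apply, hW0, hAt]
          exact (hαval b y v v').symm
        have hL3' : I1.dualMap ∘ₗ W0 ∘ₗ Ib = A := dual_ext fun y v b v' => by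
          simp only [LinearMap.comp_apply, I1, Ib, ι1, ιb, LinearMap.rTensor_tmul,
            Submodule.subtype_apply, LinearMap.dualMap_apply, hW0, hA]
          calc φ ↑y ↑b v v' = φ ↑b ↑y v v' := by rw [hsymm (↑y : H) (↑b : H)]
            _ = α b y v v' := rfl
        set u : H ⊗[k] V := I1 (a ⊗ₜ v) - Ib (Wbinv (At (a ⊗ₜ v))) with hudef
        have hRu : R u = 0 := by
          rw [hudef, map_sub]
          have c1 : R (I1 (a ⊗ₜ[k] v)) = At (a ⊗ₜ[k] v) :=
            LinearMap.congr_fun hL1' (a ⊗ₜ[k] v)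
          have c2 : R (Ib (Wbinv (At (a ⊗ₜ[k] v)))) = Wb0 (Wbinv (At (a ⊗ₜ[k] v))) := by
            rw [hWb0R]; rfl
          rw [c1, c2, ← hWbeq, hinv1]
          simp
        have hW0u : W0 u = 0 := hkerR u hRu
        have heval : W0 u (I1 (a' ⊗ₜ v')) = 0 := by rw [hW0u]; simp
        rw [hudef, map_sub, LinearMap.sub_apply] at heval
        have c3 : W0 (I1 (a ⊗ₜ[k] v)) (I1 (a' ⊗ₜ[k] v')) = φ ↑a ↑a' v v' := by
          simp only [I1, ι1, LinearMap.rTensor_tmul, Submodule.subtype_apply, hW0]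
        have c4 : W0 (Ib (Wbinv (At (a ⊗ₜ[k] v)))) (I1 (a' ⊗ₜ[k] v'))
            = A (Wbinv (At (a ⊗ₜ[k] v))) (a' ⊗ₜ[k] v') := by
          have := LinearMap.congr_fun hL3' (Wbinv (At (a ⊗ₜ[k] v)))
          have h5 := LinearMap.congr_fun this (a' ⊗ₜ[k] v')
          simpa [LinearMap.comp_apply, LinearMap.dualMap_apply] using h5
        rw [c3, c4] at heval
        exact sub_eq_zero.mp heval
    refine ⟨(φb, α), ⟨?_, hbijWb, fun a x v => haltφ (↑a : H) (↑x : H) v, hcorr⟩, ?_⟩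
    · constructor
      · intro x y
        apply LinearMap.ext; intro v; apply LinearMap.ext; intro v'
        calc φb x y v v' = φ ↑x ↑y v v' := rfl
          _ = φ ↑y ↑x v v' := by rw [hsymm (↑x : H) (↑y : H)]
          _ = φb y x v v' := rfl
      · intro x y v
        exact haltφ (↑x : H) (↑y : H) v
    · rintro ⟨φb', α'⟩ ⟨hsa', hbij', halt', hcorr'⟩
      have h1 : φb' = φb := by
        ext x y v v'
        rw [← hcorr'.1 x y v v']
        rfl
      have h2 : α' = α := by
        ext a x v v'
        rw [← (hcorr'.2.1 a x v v').2]
        rfl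
      simp only [Prod.mk.injEq]
      exact ⟨h1, h2⟩
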